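/- Let H be a real Hilbert space and B : H → H a bounded self-adjoint operator with ⟨Bx,x⟩ ≥ 0 for all x. Let 0 < μ < 1/2 and define φ(z) = ⟨Bz, z⟩^{1−μ}/(2(1−μ)) for z ∈ H. Then φ is convex, continuous, and Fréchet differentiable on H, with derivative φ'(z) = ⟨Bz, z⟩^{−μ}·Bz for z with ⟨Bz,z⟩ ≠ 0 and φ'(0) = 0; in particular at z = 0 one has φ(h)/‖h‖ → 0 as h → 0. -/

import Mathlib

open RealInnerProductSpace Filter

/-- For `B = B* ≥ 0` bounded and `0 < μ < 1/2`, the functional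
`φ z = ⟪B z, z⟫^(1-μ) / (2(1-μ))` is convex, continuous and Fréchet
differentiable, with `φ'(z) = ⟪B z, z⟫^(-μ) • ⟪B z, ·⟫` when `⟪B z, z⟫ ≠ 0`
and `φ'(0) = 0`; in particular `φ(h)/‖h‖ → 0` as `h → 0`. -/
theorem stmt_8 {H : Type*} [NormedAddCommGroup H] [InnerProductSpace ℝ H]
    (B : H →L[ℝ] H)
    (hsa : ∀ x y : H, ⟪B x, y⟫ = ⟪x, B y⟫)
    (hpos : ∀ x : H, 0 ≤ ⟪B x, x⟫)
    (μ : ℝ) (hμ0 : 0 < μ) (hμ : μ < 1 / 2)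
    (φ : H → ℝ) (hφ : ∀ z, φ z = ⟪B z, z⟫ ^ (1 - μ) / (2 * (1 - μ))) :
    ConvexOn ℝ Set.univ φ ∧ Continuous φ ∧
    (∀ z : H, ⟪B z, z⟫ ≠ 0 →
      HasFDerivAt φ ((⟪B z, z⟫ ^ (-μ)) • (innerSL ℝ (B z))) z) ∧
    HasFDerivAt φ (0 : H →L[ℝ] ℝ) 0 ∧
    Tendsto (fun h : H => φ h / ‖h‖) (nhds 0) (nhds 0) := by
  have hμ1 : (1:ℝ) - μ ≠ 0 := by linarith
  have hc : (0:ℝ) < 2 * (1 - μ) := by linarith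
  -- Cauchy–Schwarz for the positive form
  have hCS : ∀ x y : H, ⟪B x, y⟫ ^ 2 ≤ ⟪B x, x⟫ * ⟪B y, y⟫ := by
    intro x y
    have key : ∀ t : ℝ, 0 ≤ ⟪B y, y⟫ * (t * t) + (2 * ⟪B x, y⟫) * t + ⟪B x, x⟫ := by
      intro t
      have h0 := hpos (x + t • y)
      have hsym : ⟪B y, x⟫ = ⟪B x, y⟫ := by rw [hsa y x, real_inner_comm]
      have hexp : ⟪B (x + t • y), x + t • y⟫ =
          ⟪B y, y⟫ * (t * t) + (2 * ⟪B x, y⟫) * t + ⟪B x, x⟫ := by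
        simp only [map_add, map_smul, inner_add_left, inner_add_right,
          real_inner_smul_left, real_inner_smul_right, hsym]
        ring
      linarith [hexp ▸ h0]
    have hd := discrim_le_zero key
    rw [discrim] at hd
    nlinarith [hd]
  -- square root of the form is subadditive and homogeneous
  have hF : ∀ x y : H, Real.sqrt ⟪B (x + y), x + y⟫ ≤
      Real.sqrt ⟪B x, x⟫ + Real.sqrt ⟪B y, y⟫ := by
    intro x y
    have s1 := Real.sqrt_nonneg ⟪B x, x⟫
    have s2 := Real.sqrt_nonneg ⟪B y, y⟫
    have e1 := Real.sq_sqrt (hpos x)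
    have e2 := Real.sq_sqrt (hpos y)
    have h1 : ⟪B x, y⟫ ≤ Real.sqrt ⟪B x, x⟫ * Real.sqrt ⟪B y, y⟫ := by
      calc ⟪B x, y⟫ ≤ |⟪B x, y⟫| := le_abs_self _
        _ = Real.sqrt (⟪B x, y⟫ ^ 2) := (Real.sqrt_sq_eq_abs _).symm
        _ ≤ Real.sqrt (⟪B x, x⟫ * ⟪B y, y⟫) := Real.sqrt_le_sqrt (hCS x y)
        _ = Real.sqrt ⟪B x, x⟫ * Real.sqrt ⟪B y, y⟫ := Real.sqrt_mul (hpos x) _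
    have hsym : ⟪B y, x⟫ = ⟪B x, y⟫ := by rw [hsa y x, real_inner_comm]
    have hexp : ⟪B (x + y), x + y⟫ ≤ (Real.sqrt ⟪B x, x⟫ + Real.sqrt ⟪B y, y⟫) ^ 2 := by
      have : ⟪B (x + y), x + y⟫ = ⟪B x, x⟫ + 2 * ⟪B x, y⟫ + ⟪B y, y⟫ := by
        simp only [map_add, inner_add_left, inner_add_right, hsym]; ring
      nlinarith
    calc Real.sqrt ⟪B (x + y), x + y⟫
        ≤ Real.sqrt ((Real.sqrt ⟪B x, x⟫ + Real.sqrt ⟪B y, y⟫) ^ 2) :=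
          Real.sqrt_le_sqrt hexp
      _ = Real.sqrt ⟪B x, x⟫ + Real.sqrt ⟪B y, y⟫ := by
          rw [Real.sqrt_sq (by linarith)]
  have hFs : ∀ (c : ℝ) (x : H), Real.sqrt ⟪B (c • x), c • x⟫ = |c| * Real.sqrt ⟪B x, x⟫ := by
    intro c x
    have : ⟪B (c • x), c • x⟫ = c ^ 2 * ⟪B x, x⟫ := by
      simp only [map_smul, real_inner_smul_left, real_inner_smul_right]; ring
    rw [this, Real.sqrt_mul (sq_nonneg c), Real.sqrt_sq_eq_abs]
  -- representation via sqrt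
  have hrep : ∀ z, φ z = (Real.sqrt ⟪B z, z⟫) ^ (2 * (1 - μ)) / (2 * (1 - μ)) := by
    intro z
    rw [hφ, Real.sqrt_eq_rpow, ← Real.rpow_mul (hpos z),
      show (1:ℝ) / 2 * (2 * (1 - μ)) = 1 - μ by ring]
  -- convexity
  have hconv : ConvexOn ℝ Set.univ φ := by
    refine ⟨convex_univ, fun x _ y _ a b ha hb hab => ?_⟩
    have hFx := Real.sqrt_nonneg ⟪B x, x⟫
    have hFy := Real.sqrt_nonneg ⟪B y, y⟫
    have h1 : Real.sqrt ⟪B (a • x + b • y), a • x + b • y⟫ ≤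
        a * Real.sqrt ⟪B x, x⟫ + b * Real.sqrt ⟪B y, y⟫ := by
      calc Real.sqrt ⟪B (a • x + b • y), a • x + b • y⟫
          ≤ Real.sqrt ⟪B (a • x), a • x⟫ + Real.sqrt ⟪B (b • y), b • y⟫ := hF _ _
        _ = a * Real.sqrt ⟪B x, x⟫ + b * Real.sqrt ⟪B y, y⟫ := by
            rw [hFs, hFs, abs_of_nonneg ha, abs_of_nonneg hb]
    have hcv := convexOn_rpow (show (1:ℝ) ≤ 2 * (1 - μ) by linarith)
    have h2 := hcv.2 (Set.mem_Ici.mpr hFx) (Set.mem_Ici.mpr hFy) ha hb hab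
    simp only [smul_eq_mul] at h2
    have h3 : Real.sqrt ⟪B (a • x + b • y), a • x + b • y⟫ ^ (2 * (1 - μ)) ≤
        (a * Real.sqrt ⟪B x, x⟫ + b * Real.sqrt ⟪B y, y⟫) ^ (2 * (1 - μ)) :=
      Real.rpow_le_rpow (Real.sqrt_nonneg _) h1 (by linarith)
    have h4 := h3.trans h2
    rw [hrep, hrep, hrep]
    rw [smul_eq_mul, smul_eq_mul, ← mul_div_assoc, ← mul_div_assoc, ← add_div]
    gcongr
  -- continuity
  have hqcont : Continuous fun z : H => ⟪B z, z⟫ := B.continuous.inner continuous_id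
  have hcont : Continuous φ := by
    rw [show φ = fun z => ⟪B z, z⟫ ^ (1 - μ) / (2 * (1 - μ)) from funext hφ]
    exact (hqcont.rpow_const fun z => Or.inr (by linarith)).div_const _
  -- derivative of the quadratic form
  have hqder : ∀ z : H, HasFDerivAt (fun w : H => ⟪B w, w⟫) ((2:ℝ) • innerSL ℝ (B z)) z := by
    intro z
    have h := (B.hasFDerivAt (x := z)).inner ℝ (hasFDerivAt_id z)
    convert h using 1
    · rfl
    · rfl
    · rfl
    ext u
    simp only [ContinuousLinearMap.smul_apply, innerSL_apply_apply, smul_eq_mul,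
      ContinuousLinearMap.comp_apply, ContinuousLinearMap.prod_apply,
      ContinuousLinearMap.coe_id', id_eq, fderivInnerCLM_apply]
    rw [hsa u z, real_inner_comm]
    ring
  -- derivative away from the kernel
  have hder : ∀ z : H, ⟪B z, z⟫ ≠ 0 →
      HasFDerivAt φ ((⟪B z, z⟫ ^ (-μ)) • (innerSL ℝ (B z))) z := by
    intro z hz
    have h1 : HasDerivAt (fun t : ℝ => t ^ (1 - μ))
        ((1 - μ) * ⟪B z, z⟫ ^ (1 - μ - 1)) ⟪B z, z⟫ :=
      Real.hasDerivAt_rpow_const (Or.inl hz)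
    have h2 := (h1.comp_hasFDerivAt (f := fun w : H => ⟪B w, w⟫) z (hqder z)).const_mul ((2 * (1 - μ))⁻¹)
    rw [show φ = fun w => ⟪B w, w⟫ ^ (1 - μ) / (2 * (1 - μ)) from funext hφ]
    have heq : ∀ w : H, (2 * (1 - μ))⁻¹ * ((fun t : ℝ => t ^ (1 - μ)) ∘ fun w : H => ⟪B w, w⟫) w
        = ⟪B w, w⟫ ^ (1 - μ) / (2 * (1 - μ)) := by
      intro w; simp [Function.comp, div_eq_inv_mul]
    rw [show (fun w : H => ⟪B w, w⟫ ^ (1 - μ) / (2 * (1 - μ)))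
        = fun w => (2 * (1 - μ))⁻¹ * ((fun t : ℝ => t ^ (1 - μ)) ∘ fun w : H => ⟪B w, w⟫) w
        from funext fun w => (heq w).symm]
    convert h2 using 1
    · rfl
    · rfl
    ext u
    simp only [ContinuousLinearMap.smul_apply, innerSL_apply_apply, smul_eq_mul]
    rw [show (1:ℝ) - μ - 1 = -μ by ring]
    field_simp
  -- value at 0
  have hφ0 : φ 0 = 0 := by
    rw [hφ]
    simp [Real.zero_rpow hμ1]
  -- tendsto
  have htend : Tendsto (fun h : H => φ h / ‖h‖) (nhds 0) (nhds 0) := by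
    have hbound : ∀ h : H, φ h / ‖h‖ ≤ (‖B‖ ^ (1 - μ) / (2 * (1 - μ))) * ‖h‖ ^ (1 - 2 * μ) := by
      intro h
      rcases eq_or_ne h 0 with rfl | hh
      · simp [hφ0, Real.zero_rpow (show (1:ℝ) - 2 * μ ≠ 0 by linarith)]
      · have hn : (0:ℝ) < ‖h‖ := norm_pos_iff.mpr hh
        have hq : ⟪B h, h⟫ ≤ ‖B‖ * ‖h‖ ^ 2 := by
          calc ⟪B h, h⟫ ≤ ‖B h‖ * ‖h‖ := real_inner_le_norm _ _
            _ ≤ (‖B‖ * ‖h‖) * ‖h‖ :=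
                mul_le_mul_of_nonneg_right (B.le_opNorm h) (norm_nonneg h)
            _ = ‖B‖ * ‖h‖ ^ 2 := by ring
        have h1 : ⟪B h, h⟫ ^ (1 - μ) ≤ (‖B‖ * ‖h‖ ^ 2) ^ (1 - μ) :=
          Real.rpow_le_rpow (hpos h) hq (by linarith)
        have h2 : (‖B‖ * ‖h‖ ^ 2) ^ (1 - μ) = ‖B‖ ^ (1 - μ) * ‖h‖ ^ (2 * (1 - μ)) := by
          rw [Real.mul_rpow (norm_nonneg B) (sq_nonneg _), ← Real.rpow_natCast ‖h‖ 2,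
            ← Real.rpow_mul (norm_nonneg h)]
          norm_num
        have h3 : ‖h‖ ^ (2 * (1 - μ)) = ‖h‖ ^ (1 - 2 * μ) * ‖h‖ := by
          rw [← Real.rpow_add_one hn.ne' (1 - 2 * μ),
            show (1:ℝ) - 2 * μ + 1 = 2 * (1 - μ) by ring]
        calc φ h / ‖h‖ ≤ ‖B‖ ^ (1 - μ) * ‖h‖ ^ (2 * (1 - μ)) / (2 * (1 - μ)) / ‖h‖ := by
              gcongr
              rw [hφ]
              gcongr
              exact h2 ▸ h1
          _ = (‖B‖ ^ (1 - μ) / (2 * (1 - μ))) * ‖h‖ ^ (1 - 2 * μ) := by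
              rw [h3]; field_simp
    have hnonneg : ∀ h : H, 0 ≤ φ h / ‖h‖ := fun h =>
      div_nonneg (by rw [hφ]; exact div_nonneg (Real.rpow_nonneg (hpos h) _) hc.le)
        (norm_nonneg _)
    have hg0 : Tendsto (fun h : H => (‖B‖ ^ (1 - μ) / (2 * (1 - μ))) * ‖h‖ ^ (1 - 2 * μ))
        (nhds 0) (nhds 0) := by
      have h1 : Tendsto (fun h : H => ‖h‖) (nhds 0) (nhds 0) := tendsto_norm_zero
      have h2 := h1.rpow_const (Or.inr (show (0:ℝ) ≤ 1 - 2 * μ by linarith))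
      rw [Real.zero_rpow (show (1:ℝ) - 2 * μ ≠ 0 by linarith)] at h2
      simpa using h2.const_mul (‖B‖ ^ (1 - μ) / (2 * (1 - μ)))
    exact squeeze_zero hnonneg hbound hg0
  -- derivative at 0
  have hd0 : HasFDerivAt φ (0 : H →L[ℝ] ℝ) 0 := by
    rw [hasFDerivAt_iff_isLittleO_nhds_zero]
    simp only [zero_add, hφ0, ContinuousLinearMap.zero_apply, sub_zero]
    rw [← Asymptotics.isLittleO_norm_right]
    refine (Asymptotics.isLittleO_iff_tendsto fun h hh => ?_).mpr htend
    rw [norm_eq_zero] at hh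
    rw [hh, hφ0]
  exact ⟨hconv, hcont, hder, hd0, htend⟩
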